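/- Let p < 0. For any measure space (X, 𝒜, μ) and any measurable f, g : X → (0,∞] (with the convention f^p = 0 where f = ∞) such that ∫ f^p dμ < ∞, ∫ g^p dμ < ∞ and ∫ f^p dμ + ∫ g^p dμ > 0, setting Γ := 2·∫ (fg)^{p/2} dμ / (∫ f^p dμ + ∫ g^p dμ), one has ∫ (f+g)^p dμ ≥ ( ((1+√(1−Γ²))/2)^{1/p} + ((1−√(1−Γ²))/2)^{1/p} )^p · (∫ f^p dμ + ∫ g^p dμ). -/

import Mathlib

open Real Set Filter Topology MeasureTheory
open scoped ENNReal

namespace St2Aux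

variable {p : ℝ}

noncomputable def ps (p t : ℝ) : ℝ := (2 * Real.cosh (-1/p * t)) ^ p

noncomputable def Ef (p t : ℝ) : ℝ :=
  Real.sinh (-1/p * t) * (2 * Real.cosh (-1/p * t)) ^ (p-1) / Real.sinh t

noncomputable def e0 (p t₀ : ℝ) : ℝ :=
  if t₀ = 0 then (-1/p) * (2:ℝ) ^ (p-1) else Ef p t₀

lemma sinh_le_mul_cosh {t : ℝ} (ht : 0 ≤ t) : Real.sinh t ≤ t * Real.cosh t := by
  have key : MonotoneOn (fun t : ℝ => t * Real.cosh t - Real.sinh t) (Ici 0) := by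
    apply monotoneOn_of_deriv_nonneg (convex_Ici 0)
    · exact ((continuous_id.mul Real.continuous_cosh).sub Real.continuous_sinh).continuousOn
    · intro x hx
      exact (((differentiable_id.mul Real.differentiable_cosh).sub Real.differentiable_sinh) x).differentiableWithinAt
    · intro x hx
      have hd : HasDerivAt (fun t : ℝ => t * Real.cosh t - Real.sinh t)
          (1 * Real.cosh x + x * Real.sinh x - Real.cosh x) x :=
        ((hasDerivAt_id x).mul (Real.hasDerivAt_cosh x)).sub (Real.hasDerivAt_sinh x)
      rw [hd.deriv]
      rw [interior_Ici, mem_Ioi] at hx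
      nlinarith [Real.sinh_pos_iff.2 hx]
  have := key (self_mem_Ici) (mem_Ici.2 ht) ht
  simp at this
  linarith

lemma core {s t : ℝ} (hs : 0 < s) (ht : 0 < t) :
    s * Real.sinh t ≤ Real.sinh (s*t) ^ 2 * Real.sinh t
      + Real.sinh (s*t) * Real.cosh (s*t) * Real.cosh t := by
  set x := s * t with hx
  have hx0 : 0 < x := mul_pos hs ht
  have h1 : s * Real.sinh t ≤ s * (t * Real.cosh t) :=
    mul_le_mul_of_nonneg_left (sinh_le_mul_cosh ht.le) hs.le
  have h2 : x ≤ Real.sinh x := (Real.self_le_sinh_iff).2 hx0.le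
  have h3 : Real.sinh x ≤ Real.sinh x * Real.cosh x := by
    nlinarith [Real.one_le_cosh x, Real.sinh_nonneg_iff.2 hx0.le]
  have h4 : x * Real.cosh t ≤ Real.sinh x * Real.cosh x * Real.cosh t := by
    have := h2.trans h3
    have hc : (0:ℝ) < Real.cosh t := Real.cosh_pos t
    nlinarith
  have h5 : (0:ℝ) ≤ Real.sinh x ^ 2 * Real.sinh t := by
    positivity
  calc s * Real.sinh t ≤ s * (t * Real.cosh t) := h1
    _ = x * Real.cosh t := by rw [hx]; ring
    _ ≤ Real.sinh x * Real.cosh x * Real.cosh t := h4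
    _ ≤ _ := by linarith

lemma two_cosh_pos (y : ℝ) : (0:ℝ) < 2 * Real.cosh y := by positivity

lemma hasDerivAt_inner (s t : ℝ) :
    HasDerivAt (fun t : ℝ => 2 * Real.cosh (s * t)) (2 * (Real.sinh (s*t) * s)) t := by
  have h1 : HasDerivAt (fun t : ℝ => s * t) s t := by
    simpa using (hasDerivAt_id t).const_mul s
  exact ((Real.hasDerivAt_cosh (s*t)).comp t h1).const_mul 2

lemma hasDerivAt_ps (hp : p < 0) (t : ℝ) :
    HasDerivAt (ps p) (-2 * Real.sinh (-1/p * t) * (2 * Real.cosh (-1/p * t)) ^ (p-1)) t := by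
  have h := ((hasDerivAt_inner (-1/p) t).rpow_const (p := p)
    (Or.inl (two_cosh_pos _).ne'))
  convert h using 1
  · rfl
  have hp0 : p ≠ 0 := hp.ne
  field_simp

lemma hasDerivAt_Ef (hp : p < 0) {t : ℝ} (ht : t ≠ 0) :
    HasDerivAt (Ef p)
      (((Real.cosh (-1/p*t) * (-1/p) * (2 * Real.cosh (-1/p*t)) ^ (p-1)
          + Real.sinh (-1/p*t) * (2 * (Real.sinh (-1/p*t) * (-1/p)) * (p-1) * (2 * Real.cosh (-1/p*t)) ^ (p-1-1)))
          * Real.sinh t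
        - Real.sinh (-1/p*t) * (2 * Real.cosh (-1/p*t)) ^ (p-1) * Real.cosh t)
        / Real.sinh t ^ 2) t := by
  have hst : HasDerivAt (fun t : ℝ => -1/p * t) (-1/p) t := by
    simpa using (hasDerivAt_id t).const_mul (-1/p)
  have hsh : HasDerivAt (fun t : ℝ => Real.sinh (-1/p * t)) (Real.cosh (-1/p*t) * (-1/p)) t :=
    (Real.hasDerivAt_sinh (-1/p*t)).comp t hst
  have hpow : HasDerivAt (fun t : ℝ => (2 * Real.cosh (-1/p * t)) ^ (p-1))
      (2 * (Real.sinh (-1/p*t) * (-1/p)) * (p-1) * (2 * Real.cosh (-1/p*t)) ^ (p-1-1)) t :=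
    (hasDerivAt_inner (-1/p) t).rpow_const (Or.inl (two_cosh_pos _).ne')
  exact (hsh.mul hpow).div (Real.hasDerivAt_sinh t) (Real.sinh_ne_zero.2 ht)

lemma deriv_Ef_nonpos (hp : p < 0) {t : ℝ} (ht : 0 < t) : deriv (Ef p) t ≤ 0 := by
  have hs : (0:ℝ) < -1/p := div_pos_iff.2 (Or.inr ⟨by norm_num, hp⟩)
  have hd := hasDerivAt_Ef hp ht.ne'
  rw [hd.deriv]
  set s : ℝ := -1/p with hsdef
  set x : ℝ := s * t with hxdef
  have h2c : (2 * Real.cosh x) ≠ 0 := (two_cosh_pos x).ne'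
  have hrw : (2 * Real.cosh x) ^ (p-1) = (2 * Real.cosh x) ^ (p-1-1) * (2 * Real.cosh x) := by
    rw [← Real.rpow_add_one h2c]; ring_nf
  have hR : (0:ℝ) < (2 * Real.cosh x) ^ (p-1-1) := Real.rpow_pos_of_pos (two_cosh_pos x) _
  set R : ℝ := (2 * Real.cosh x) ^ (p-1-1) with hRdef
  rw [hrw]
  apply div_nonpos_of_nonpos_of_nonneg _ (sq_nonneg _)
  have hcore := core hs ht
  have hps : p * s = -1 := by rw [hsdef]; field_simp; rw [div_self hp.ne]
  have hcsq : Real.cosh x ^ 2 = Real.sinh x ^ 2 + 1 := Real.cosh_sq x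
  have hfact : (Real.cosh x * s * (R * (2 * Real.cosh x))
        + Real.sinh x * (2 * (Real.sinh x * s) * (p - 1) * R)) * Real.sinh t
      - Real.sinh x * (R * (2 * Real.cosh x)) * Real.cosh t
      = 2 * R * (s * Real.sinh t - Real.sinh x ^ 2 * Real.sinh t
          - Real.sinh x * Real.cosh x * Real.cosh t) := by
    linear_combination (2*R*s*Real.sinh t) * hcsq + (2*R*Real.sinh x^2*Real.sinh t) * hps
  rw [hfact]
  apply mul_nonpos_of_nonneg_of_nonpos (by positivity)
  linarith

lemma antitoneOn_Ef (hp : p < 0) : AntitoneOn (Ef p) (Ioi 0) := by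
  apply antitoneOn_of_deriv_nonpos (convex_Ioi 0)
  · intro t ht
    exact (hasDerivAt_Ef hp (ne_of_gt ht)).continuousAt.continuousWithinAt
  · intro t ht
    rw [interior_Ioi] at ht
    exact (hasDerivAt_Ef hp (ne_of_gt ht)).differentiableAt.differentiableWithinAt
  · intro t ht
    rw [interior_Ioi] at ht
    exact deriv_Ef_nonpos hp ht

lemma tendsto_Ef_zero (hp : p < 0) :
    Tendsto (Ef p) (𝓝[>] (0:ℝ)) (𝓝 ((-1/p) * (2:ℝ) ^ (p-1))) := by
  have hs : (0:ℝ) < -1/p := div_pos_iff.2 (Or.inr ⟨by norm_num, hp⟩)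
  set s : ℝ := -1/p
  -- sinh (s t) / t → s
  have h1 : Tendsto (fun t : ℝ => Real.sinh (s*t) / t) (𝓝[≠] (0:ℝ)) (𝓝 s) := by
    have hd : HasDerivAt (fun t : ℝ => Real.sinh (s * t)) (Real.cosh (s*0) * s) 0 :=
      (Real.hasDerivAt_sinh (s*0)).comp 0 (by simpa using (hasDerivAt_id (0:ℝ)).const_mul s)
    have h2 := hasDerivAt_iff_tendsto_slope.1 hd
    have : Real.cosh (s*0) * s = s := by simp
    rw [this] at h2
    refine h2.congr' ?_
    filter_upwards [self_mem_nhdsWithin] with t ht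
    simp only [Set.mem_compl_iff, Set.mem_singleton_iff] at ht
    rw [slope_def_field]
    simp
  have h2 : Tendsto (fun t : ℝ => Real.sinh t / t) (𝓝[≠] (0:ℝ)) (𝓝 1) := by
    have h2 := hasDerivAt_iff_tendsto_slope.1 (Real.hasDerivAt_sinh 0)
    simp only [Real.cosh_zero] at h2
    refine h2.congr' ?_
    filter_upwards [self_mem_nhdsWithin] with t ht
    rw [slope_def_field]
    simp
  have h3 : Tendsto (fun t : ℝ => (2*Real.cosh (s*t)) ^ (p-1)) (𝓝[≠] (0:ℝ)) (𝓝 ((2:ℝ)^(p-1))) := by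
    have hc : ContinuousAt (fun t : ℝ => (2*Real.cosh (s*t)) ^ (p-1)) 0 := by
      apply ContinuousAt.rpow_const
      · exact (continuous_const.mul (Real.continuous_cosh.comp (continuous_const.mul continuous_id))).continuousAt
      · left; positivity
    have := hc.continuousWithinAt (s := {(0:ℝ)}ᶜ)
    simpa using this.tendsto
  have hmain : Tendsto (fun t : ℝ => (Real.sinh (s*t)/t) / (Real.sinh t / t) * (2*Real.cosh (s*t)) ^ (p-1))
      (𝓝[≠] (0:ℝ)) (𝓝 (s * (2:ℝ)^(p-1))) := by
    have := (h1.div h2 one_ne_zero).mul h3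
    simpa using this
  have : Tendsto (fun t : ℝ => (Real.sinh (s*t)/t) / (Real.sinh t / t) * (2*Real.cosh (s*t)) ^ (p-1))
      (𝓝[>] (0:ℝ)) (𝓝 (s * (2:ℝ)^(p-1))) :=
    hmain.mono_left (nhdsWithin_mono _ (fun x hx => ne_of_gt hx))
  refine this.congr' ?_
  filter_upwards [self_mem_nhdsWithin] with t ht
  have ht0 : t ≠ 0 := ne_of_gt ht
  unfold Ef
  field_simp
  ring_nf
  simp only [s]
  ring_nf

lemma Ef_le_e0 (hp : p < 0) {t₀ t : ℝ} (ht₀ : 0 ≤ t₀) (ht : t₀ ≤ t) (htpos : 0 < t) :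
    Ef p t ≤ e0 p t₀ := by
  rcases eq_or_lt_of_le ht₀ with h0 | h0
  · rw [e0, if_pos h0.symm]
    have hmono := antitoneOn_Ef hp
    have hlim := tendsto_Ef_zero hp
    refine ge_of_tendsto hlim ?_
    filter_upwards [self_mem_nhdsWithin, Ioo_mem_nhdsGT htpos] with τ hτ hτ2
    exact hmono hτ (mem_Ioi.2 htpos) (le_of_lt hτ2.2)
  · rw [e0, if_neg (ne_of_gt h0)]
    exact antitoneOn_Ef hp (mem_Ioi.2 h0) (mem_Ioi.2 (lt_of_lt_of_le h0 ht)) ht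

lemma e0_le_Ef (hp : p < 0) {t₀ t : ℝ} (ht : 0 < t) (htle : t ≤ t₀) :
    e0 p t₀ ≤ Ef p t := by
  rw [e0, if_neg (ne_of_gt (lt_of_lt_of_le ht htle))]
  exact antitoneOn_Ef hp (mem_Ioi.2 ht) (mem_Ioi.2 (lt_of_lt_of_le ht htle)) htle

lemma e0_nonneg (hp : p < 0) {t₀ : ℝ} (ht₀ : 0 ≤ t₀) : 0 ≤ e0 p t₀ := by
  have hs : (0:ℝ) < -1/p := div_pos_iff.2 (Or.inr ⟨by norm_num, hp⟩)
  rcases eq_or_lt_of_le ht₀ with h0 | h0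
  · rw [e0, if_pos h0.symm]; positivity
  · rw [e0, if_neg (ne_of_gt h0)]
    unfold Ef
    have h1 : 0 ≤ Real.sinh (-1/p*t₀) := Real.sinh_nonneg_iff.2 (by positivity)
    have h2 : 0 < Real.sinh t₀ := Real.sinh_pos_iff.2 h0
    positivity

lemma hasDerivAt_theta (hp : p < 0) (c τ : ℝ) :
    HasDerivAt (fun τ => ps p τ + c * (2 * Real.cosh τ))
      (-2 * Real.sinh (-1/p * τ) * (2 * Real.cosh (-1/p * τ)) ^ (p-1) + c * (2 * Real.sinh τ)) τ :=
  (hasDerivAt_ps hp τ).add (((Real.hasDerivAt_cosh τ).const_mul 2).const_mul c)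

lemma key (hp : p < 0) {t₀ t : ℝ} (ht₀ : 0 ≤ t₀) (ht : 0 ≤ t) :
    ps p t₀ + e0 p t₀ * (2 * Real.cosh t₀) ≤ ps p t + e0 p t₀ * (2 * Real.cosh t) := by
  set c := e0 p t₀ with hc
  set Θ : ℝ → ℝ := fun τ => ps p τ + c * (2 * Real.cosh τ) with hΘ
  have hcont : Continuous Θ := by
    have : ∀ τ, HasDerivAt Θ _ τ := fun τ => hasDerivAt_theta hp c τ
    exact continuous_iff_continuousAt.2 fun τ => (hasDerivAt_theta hp c τ).continuousAt
  rcases le_total t₀ t with hle | hle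
  · have hmono : MonotoneOn Θ (Icc t₀ t) := by
      apply monotoneOn_of_deriv_nonneg (convex_Icc _ _) hcont.continuousOn
      · intro τ _
        exact (hasDerivAt_theta hp c τ).differentiableAt.differentiableWithinAt
      · intro τ hτ
        rw [interior_Icc] at hτ
        have hτ0 : 0 < τ := lt_of_le_of_lt ht₀ hτ.1
        have hE : Ef p τ ≤ c := Ef_le_e0 hp ht₀ hτ.1.le hτ0
        rw [(hasDerivAt_theta hp c τ).deriv]
        have hsinh : 0 < Real.sinh τ := Real.sinh_pos_iff.2 hτ0
        rw [Ef, div_le_iff₀ hsinh] at hE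
        nlinarith
    exact hmono (left_mem_Icc.2 hle) (right_mem_Icc.2 hle) hle
  · have hmono : AntitoneOn Θ (Icc t t₀) := by
      apply antitoneOn_of_deriv_nonpos (convex_Icc _ _) hcont.continuousOn
      · intro τ _
        exact (hasDerivAt_theta hp c τ).differentiableAt.differentiableWithinAt
      · intro τ hτ
        rw [interior_Icc] at hτ
        have hτ0 : 0 < τ := lt_of_le_of_lt ht hτ.1
        have hE : c ≤ Ef p τ := e0_le_Ef hp hτ0 hτ.2.le
        rw [(hasDerivAt_theta hp c τ).deriv]
        have hsinh : 0 < Real.sinh τ := Real.sinh_pos_iff.2 hτ0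
        rw [Ef, le_div_iff₀ hsinh] at hE
        nlinarith
    exact hmono (left_mem_Icc.2 hle) (right_mem_Icc.2 hle) hle

lemma ps_abs (hp : p < 0) (t : ℝ) : ps p |t| = ps p t := by
  have hs : (0:ℝ) < -1/p := div_pos_iff.2 (Or.inr ⟨by norm_num, hp⟩)
  unfold ps
  rw [show -1/p * |t| = |(-1/p) * t| by rw [abs_mul, abs_of_pos hs], Real.cosh_abs]

lemma key' (hp : p < 0) {t₀ : ℝ} (ht₀ : 0 ≤ t₀) (t : ℝ) :
    ps p t₀ + e0 p t₀ * (2 * Real.cosh t₀) ≤ ps p t + e0 p t₀ * (2 * Real.cosh t) := by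
  have := key hp ht₀ (abs_nonneg t)
  rwa [ps_abs hp, Real.cosh_abs] at this

/-- The main pointwise real inequality. -/
lemma main_real (hp : p < 0) {t₀ : ℝ} (ht₀ : 0 ≤ t₀) {P Q : ℝ} (hP : 0 < P) (hQ : 0 < Q) :
    (ps p t₀ + e0 p t₀ * (2 * Real.cosh t₀)) * (P*Q)^(p/2)
      ≤ (P+Q)^p + e0 p t₀ * (P^p + Q^p) := by
  set LP := Real.log P with hLP
  set LQ := Real.log Q with hLQ
  set t : ℝ := LP * (p/2) - LQ * (p/2) with htdef
  have hkey := key' hp ht₀ t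
  -- identities
  have hst : -1/p * t = LQ * (1/2) - LP * (1/2) := by
    field_simp [htdef, hp.ne]
    ring
  have hcosh2 : 2 * Real.cosh (-1/p * t)
      = (P + Q) * Real.exp (-(LP + LQ)/2) := by
    rw [hst, Real.cosh_eq]
    have h1 : Real.exp (LQ * (1/2) - LP * (1/2))
        = Q * Real.exp (-(LP+LQ)/2) := by
      rw [show LQ * (1/2) - LP * (1/2) = LQ + (-(LP+LQ)/2) by ring, Real.exp_add,
        Real.exp_log hQ]
    have h2 : Real.exp (-(LQ * (1/2) - LP * (1/2)))
        = P * Real.exp (-(LP+LQ)/2) := by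
      rw [show -(LQ * (1/2) - LP * (1/2)) = LP + (-(LP+LQ)/2) by ring, Real.exp_add,
        Real.exp_log hP]
    rw [h1, h2]; ring
  have hcosht : 2 * Real.cosh t = (P^p + Q^p) * Real.exp (-(LP+LQ)/2*p) := by
    rw [Real.cosh_eq]
    have h1 : Real.exp t = P^p * Real.exp (-(LP+LQ)/2*p) := by
      rw [Real.rpow_def_of_pos hP, ← Real.exp_add, ← hLP]
      congr 1
      rw [htdef]; ring
    have h2 : Real.exp (-t) = Q^p * Real.exp (-(LP+LQ)/2*p) := by
      rw [Real.rpow_def_of_pos hQ, ← Real.exp_add, ← hLQ]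
      congr 1
      rw [htdef]; ring
    rw [h1, h2]; ring
  have hPQpos : (0:ℝ) < P + Q := by linarith
  have hpsval : ps p t = (P+Q)^p * Real.exp (-(LP+LQ)/2*p) := by
    unfold ps
    rw [hcosh2, Real.mul_rpow hPQpos.le (Real.exp_pos _).le, ← Real.exp_mul]
  have hM : (0:ℝ) < (P*Q)^(p/2) := Real.rpow_pos_of_pos (mul_pos hP hQ) _
  have hWM : Real.exp (-(LP+LQ)/2*p) * (P*Q)^(p/2) = 1 := by
    rw [Real.rpow_def_of_pos (mul_pos hP hQ), Real.log_mul hP.ne' hQ.ne', ← hLP, ← hLQ,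
      ← Real.exp_add, show -(LP+LQ)/2*p + (LP+LQ)*(p/2) = 0 by ring, Real.exp_zero]
  calc (ps p t₀ + e0 p t₀ * (2 * Real.cosh t₀)) * (P*Q)^(p/2)
      ≤ (ps p t + e0 p t₀ * (2 * Real.cosh t)) * (P*Q)^(p/2) :=
        mul_le_mul_of_nonneg_right hkey hM.le
    _ = ((P+Q)^p + e0 p t₀ * (P^p + Q^p)) * (Real.exp (-(LP+LQ)/2*p) * (P*Q)^(p/2)) := by
        rw [hpsval, hcosht]; ring
    _ = (P+Q)^p + e0 p t₀ * (P^p + Q^p) := by rw [hWM]; ring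

lemma ennreal_pointwise (hp : p < 0) {T E : ℝ} (hT : 0 ≤ T) (hE : 0 ≤ E)
    (hreal : ∀ P Q : ℝ, 0 < P → 0 < Q → T * (P*Q)^(p/2) ≤ (P+Q)^p + E * (P^p + Q^p))
    {a b : ℝ≥0∞} (ha : 0 < a) (hb : 0 < b) :
    ENNReal.ofReal T * (a*b)^(p/2) ≤ (a+b)^p + ENNReal.ofReal E * (a^p + b^p) := by
  have hp2 : p/2 < 0 := by linarith
  by_cases ha' : a = ∞
  · rw [ha', ENNReal.top_mul hb.ne', ENNReal.top_rpow_of_neg hp2, mul_zero]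
    exact zero_le
  by_cases hb' : b = ∞
  · rw [hb', ENNReal.mul_top ha.ne', ENNReal.top_rpow_of_neg hp2, mul_zero]
    exact zero_le
  set P := a.toReal with hP
  set Q := b.toReal with hQ
  have hPpos : 0 < P := ENNReal.toReal_pos ha.ne' ha'
  have hQpos : 0 < Q := ENNReal.toReal_pos hb.ne' hb'
  have haP : a = ENNReal.ofReal P := (ENNReal.ofReal_toReal ha').symm
  have hbQ : b = ENNReal.ofReal Q := (ENNReal.ofReal_toReal hb').symm
  rw [haP, hbQ, ← ENNReal.ofReal_mul hPpos.le, ← ENNReal.ofReal_add hPpos.le hQpos.le,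
    ENNReal.ofReal_rpow_of_pos (mul_pos hPpos hQpos),
    ENNReal.ofReal_rpow_of_pos (by linarith : (0:ℝ) < P + Q),
    ENNReal.ofReal_rpow_of_pos hPpos, ENNReal.ofReal_rpow_of_pos hQpos,
    ← ENNReal.ofReal_mul hT,
    ← ENNReal.ofReal_add (Real.rpow_nonneg hPpos.le _) (Real.rpow_nonneg hQpos.le _),
    ← ENNReal.ofReal_mul hE,
    ← ENNReal.ofReal_add (Real.rpow_nonneg (by linarith : (0:ℝ) ≤ P+Q) _)
      (mul_nonneg hE (by positivity))]
  exact ENNReal.ofReal_le_ofReal (hreal P Q hPpos hQpos)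

-- pointwise AM-GM: 2 (a b)^(p/2) ≤ a^p + b^p
lemma amgm_pointwise (hp : p < 0) {a b : ℝ≥0∞} (ha : 0 < a) (hb : 0 < b) :
    2 * (a*b)^(p/2) ≤ a^p + b^p := by
  have hp2 : p/2 < 0 := by linarith
  by_cases ha' : a = ∞
  · rw [ha', ENNReal.top_mul hb.ne', ENNReal.top_rpow_of_neg hp2, mul_zero]
    exact zero_le
  by_cases hb' : b = ∞
  · rw [hb', ENNReal.mul_top ha.ne', ENNReal.top_rpow_of_neg hp2, mul_zero]
    exact zero_le
  have hPpos : 0 < a.toReal := ENNReal.toReal_pos ha.ne' ha'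
  have hQpos : 0 < b.toReal := ENNReal.toReal_pos hb.ne' hb'
  rw [(ENNReal.ofReal_toReal ha').symm, (ENNReal.ofReal_toReal hb').symm,
    ← ENNReal.ofReal_mul hPpos.le,
    ENNReal.ofReal_rpow_of_pos (mul_pos hPpos hQpos),
    ENNReal.ofReal_rpow_of_pos hPpos, ENNReal.ofReal_rpow_of_pos hQpos,
    ← ENNReal.ofReal_add (Real.rpow_nonneg hPpos.le _) (Real.rpow_nonneg hQpos.le _),
    show (2:ℝ≥0∞) = ENNReal.ofReal (2:ℝ) by norm_num,
    ← ENNReal.ofReal_mul (by norm_num : (0:ℝ) ≤ 2)]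
  apply ENNReal.ofReal_le_ofReal
  set P := a.toReal
  set Q := b.toReal
  have h1 : (P*Q)^(p/2) = P^(p/2) * Q^(p/2) := Real.mul_rpow hPpos.le hQpos.le
  have h2 : P^(p/2) * P^(p/2) = P^p := by
    rw [← Real.rpow_add hPpos]; norm_num
  have h3 : Q^(p/2) * Q^(p/2) = Q^p := by
    rw [← Real.rpow_add hQpos]; norm_num
  nlinarith [sq_nonneg (P^(p/2) - Q^(p/2)), Real.rpow_pos_of_pos hPpos (p/2),
    Real.rpow_pos_of_pos hQpos (p/2)]

end St2Aux

open St2Aux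

set_option maxHeartbeats 1000000 in
theorem statement2
    {X : Type*} [MeasurableSpace X] (μ : Measure X) (p : ℝ)
    (hp : p < 0)
    (f g : X → ℝ≥0∞) (hf : Measurable f) (hg : Measurable g)
    (hfpos : ∀ x, 0 < f x) (hgpos : ∀ x, 0 < g x)
    (hfp : ∫⁻ x, f x ^ p ∂μ ≠ ∞) (hgp : ∫⁻ x, g x ^ p ∂μ ≠ ∞)
    (hpos : 0 < ∫⁻ x, f x ^ p ∂μ + ∫⁻ x, g x ^ p ∂μ)
    (Γ : ℝ)
    (hΓ : Γ = 2 * (∫⁻ x, (f x * g x) ^ (p / 2) ∂μ).toReal /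
        ((∫⁻ x, f x ^ p ∂μ).toReal + (∫⁻ x, g x ^ p ∂μ).toReal)) :
    (ENNReal.ofReal ((1 + Real.sqrt (1 - Γ ^ 2)) / 2) ^ (1 / p) +
        ENNReal.ofReal ((1 - Real.sqrt (1 - Γ ^ 2)) / 2) ^ (1 / p)) ^ p *
      (∫⁻ x, f x ^ p ∂μ + ∫⁻ x, g x ^ p ∂μ) ≤
      ∫⁻ x, (f x + g x) ^ p ∂μ := by
  have hp' : 1/p < 0 := div_neg_of_pos_of_neg one_pos hp
  set A := ∫⁻ x, f x ^ p ∂μ with hA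
  set B := ∫⁻ x, g x ^ p ∂μ with hB
  set C := ∫⁻ x, (f x * g x) ^ (p / 2) ∂μ with hC
  set I := ∫⁻ x, (f x + g x) ^ p ∂μ with hI
  have mf : Measurable fun x => f x ^ p := ENNReal.continuous_rpow_const.measurable.comp hf
  have mg : Measurable fun x => g x ^ p := ENNReal.continuous_rpow_const.measurable.comp hg
  have mfg : Measurable fun x => (f x * g x) ^ (p/2) :=
    ENNReal.continuous_rpow_const.measurable.comp (hf.mul hg)
  have msum : Measurable fun x => (f x + g x) ^ p :=
    ENNReal.continuous_rpow_const.measurable.comp (hf.add hg)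
  -- Cauchy-Schwarz / AM-GM bound: 2C ≤ A + B
  have hCS : 2 * C ≤ A + B := by
    calc 2 * C = ∫⁻ x, 2 * (f x * g x) ^ (p/2) ∂μ := (lintegral_const_mul 2 mfg).symm
      _ ≤ ∫⁻ x, (f x ^ p + g x ^ p) ∂μ :=
          lintegral_mono fun x => amgm_pointwise hp (hfpos x) (hgpos x)
      _ = A + B := lintegral_add_left mf _
  have hABtop : A + B ≠ ∞ := by
    simp [ENNReal.add_eq_top, hfp, hgp]
  have hCtop : C ≠ ∞ := by
    intro h
    rw [h, ENNReal.mul_top (by norm_num)] at hCS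
    exact hABtop (top_le_iff.1 hCS)
  set a := A.toReal with ha
  set b := B.toReal with hb
  set c := C.toReal with hc
  have hab : (A + B).toReal = a + b := ENNReal.toReal_add hfp hgp
  have habpos : 0 < a + b := by
    rw [← hab]
    exact ENNReal.toReal_pos hpos.ne' hABtop
  have hcnonneg : 0 ≤ c := ENNReal.toReal_nonneg
  have h2c : 2 * c ≤ a + b := by
    have := ENNReal.toReal_mono hABtop hCS
    rwa [ENNReal.toReal_mul, hab, show (2:ℝ≥0∞).toReal = 2 by norm_num] at this
  have hΓval : Γ = 2 * c / (a + b) := hΓ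
  have hΓnonneg : 0 ≤ Γ := by
    rw [hΓval]; positivity
  have hΓle1 : Γ ≤ 1 := by
    rw [hΓval, div_le_one habpos]; linarith
  -- degenerate case c = 0
  by_cases hc0 : c = 0
  · have hΓ0 : Γ = 0 := by rw [hΓval, hc0]; simp
    rw [hΓ0, show (1 - Real.sqrt (1 - (0:ℝ) ^ 2)) / 2 = 0 by
        rw [show (1:ℝ) - 0^2 = 1 by norm_num, Real.sqrt_one]; norm_num,
      ENNReal.ofReal_zero, ENNReal.zero_rpow_of_neg hp', add_top _,
      ENNReal.top_rpow_of_neg hp, zero_mul]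
    exact zero_le
  -- main case
  have hcpos : 0 < c := lt_of_le_of_ne hcnonneg (Ne.symm hc0)
  have hΓpos : 0 < Γ := by rw [hΓval]; positivity
  set δ := Real.sqrt (1 - Γ ^ 2) with hδ
  have hδnonneg : 0 ≤ δ := Real.sqrt_nonneg _
  have hΓsq_le : Γ ^ 2 ≤ 1 := by nlinarith [hΓnonneg, hΓle1]
  have hΓsq_pos : 0 < Γ ^ 2 := by positivity
  have hδsq : δ ^ 2 = 1 - Γ ^ 2 := Real.sq_sqrt (by linarith)
  have hδlt1 : δ < 1 := by
    by_contra h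
    push_neg at h
    have h2 : (1:ℝ) ≤ δ ^ 2 := by nlinarith [h, hδnonneg]
    linarith
  set α := (1 + δ)/2 with hα
  set β := (1 - δ)/2 with hβ
  have hαpos : 0 < α := by rw [hα]; linarith
  have hβpos : 0 < β := by rw [hβ]; linarith
  have hβα : β ≤ α := by rw [hα, hβ]; linarith
  have hαβsum : α + β = 1 := by rw [hα, hβ]; ring
  have hαβmul : α * β = Γ^2/4 := by
    rw [hα, hβ]
    linear_combination (-(1:ℝ)/4) * hδsq
  set LA := Real.log α with hLA
  set LB := Real.log β with hLB
  set t₀ := (LA - LB)/2 with ht₀def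
  have hLBA : LB ≤ LA := Real.log_le_log hβpos hβα
  have ht₀ : 0 ≤ t₀ := by rw [ht₀def]; linarith
  -- u v
  set u := Real.exp (LA * (1/2)) with hu
  set v := Real.exp (LB * (1/2)) with hv
  have hupos : 0 < u := Real.exp_pos _
  have hvpos : 0 < v := Real.exp_pos _
  have huu : u * u = α := by
    rw [hu, ← Real.exp_add, show LA*(1/2) + LA*(1/2) = LA by ring, hLA, Real.exp_log hαpos]
  have hvv : v * v = β := by
    rw [hv, ← Real.exp_add, show LB*(1/2) + LB*(1/2) = LB by ring, hLB, Real.exp_log hβpos]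
  have huv : u * v = Γ/2 := by
    have h1 : (u*v) * (u*v) = (Γ/2) * (Γ/2) := by
      calc (u*v)*(u*v) = (u*u)*(v*v) := by ring
        _ = α * β := by rw [huu, hvv]
        _ = (Γ/2)*(Γ/2) := by rw [hαβmul]; ring
    rcases mul_self_eq_mul_self_iff.1 h1 with h | h
    · exact h
    · exfalso
      have hpos' := mul_pos hupos hvpos
      rw [h] at hpos'
      linarith
  have hcosht₀ : 2 * Real.cosh t₀ = 2/Γ := by
    have he1 : Real.exp ((LA - LB)/2) = u/v := by
      rw [hu, hv, ← Real.exp_sub]; congr 1; ring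
    have he2 : Real.exp (-((LA - LB)/2)) = v/u := by
      rw [hu, hv, ← Real.exp_sub]; congr 1; ring
    have hfrac : u/v + v/u = 2/Γ := by
      rw [div_add_div _ _ hvpos.ne' hupos.ne',
        show u*u + v*v = 1 by rw [huu, hvv]; linarith,
        show v*u = Γ/2 by rw [mul_comm]; exact huv, one_div_div]
    rw [Real.cosh_eq, ht₀def, he1, he2]
    linarith
  -- K
  set KA := α ^ (1/p) with hKA
  set KB := β ^ (1/p) with hKB
  have hKApos : 0 < KA := Real.rpow_pos_of_pos hαpos _
  have hKBpos : 0 < KB := Real.rpow_pos_of_pos hβpos _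
  set K := KA + KB with hK
  have hKpos : 0 < K := by positivity
  have hKp_pos : 0 < K ^ p := Real.rpow_pos_of_pos hKpos _
  -- ps p t₀ = 2 K^p / Γ
  have hpst₀ : ps p t₀ = 2 * K ^ p / Γ := by
    set u' := Real.exp (LA * (1/p) * (1/2)) with hu'
    set v' := Real.exp (LB * (1/p) * (1/2)) with hv'
    have hu'pos : 0 < u' := Real.exp_pos _
    have hv'pos : 0 < v' := Real.exp_pos _
    have hst₀ : -1/p * t₀ = LB * (1/p) * (1/2) - LA * (1/p) * (1/2) := by
      rw [ht₀def]; field_simp; ring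
    have hcosh : 2 * Real.cosh (-1/p * t₀) = (KA + KB) / (u' * v') := by
      rw [Real.cosh_eq, hst₀]
      have he1 : Real.exp (LB * (1/p) * (1/2) - LA * (1/p) * (1/2)) = v'/u' := by
        rw [hu', hv', ← Real.exp_sub]
      have he2 : Real.exp (-(LB * (1/p) * (1/2) - LA * (1/p) * (1/2))) = u'/v' := by
        rw [hu', hv', ← Real.exp_sub]; congr 1; ring
      have hKAe : KA = u' * u' := by
        rw [hKA, hu', ← Real.exp_add, Real.rpow_def_of_pos hαpos, ← hLA]
        congr 1; ring
      have hKBe : KB = v' * v' := by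
        rw [hKB, hv', ← Real.exp_add, Real.rpow_def_of_pos hβpos, ← hLB]
        congr 1; ring
      rw [he1, he2, hKAe, hKBe]
      field_simp
      ring
    have huv' : (u' * v') ^ p = Γ / 2 := by
      have : u' * v' = Real.exp ((LA + LB) * (1/p) * (1/2)) := by
        rw [hu', hv', ← Real.exp_add]; congr 1; ring
      rw [this, ← Real.exp_mul, show (LA + LB) * (1/p) * (1/2) * p = LA * (1/2) + LB * (1/2) by
        field_simp [hp.ne], Real.exp_add, ← hu, ← hv, huv]
    rw [ps, hcosh, Real.div_rpow (by positivity) (by positivity), huv', ← hK]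
    field_simp
  -- the tangent data
  set E := e0 p t₀ with hE
  have hEnonneg : 0 ≤ E := e0_nonneg hp ht₀
  set T := ps p t₀ + E * (2 * Real.cosh t₀) with hT
  have hTval : T = (2 / Γ) * (K ^ p + E) := by
    rw [hT, hpst₀, hcosht₀]; field_simp
  have hTnonneg : 0 ≤ T := by
    rw [hTval]; positivity
  -- integral inequality
  have hint : ENNReal.ofReal T * C ≤ I + ENNReal.ofReal E * (A + B) := by
    calc ENNReal.ofReal T * C = ∫⁻ x, ENNReal.ofReal T * (f x * g x) ^ (p/2) ∂μ :=
          (lintegral_const_mul _ mfg).symm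
      _ ≤ ∫⁻ x, ((f x + g x) ^ p + ENNReal.ofReal E * (f x ^ p + g x ^ p)) ∂μ := by
          apply lintegral_mono fun x => ?_
          exact ennreal_pointwise hp hTnonneg hEnonneg
            (fun P Q hP hQ => main_real hp ht₀ hP hQ) (hfpos x) (hgpos x)
      _ = I + ENNReal.ofReal E * (A + B) := by
          rw [lintegral_add_left msum, lintegral_const_mul (f := fun x => f x ^ p + g x ^ p) _ (mf.add mg),
            lintegral_add_left mf]
  -- coefficient equals ofReal (K^p)
  have hcoef : (ENNReal.ofReal α ^ (1/p) + ENNReal.ofReal β ^ (1/p)) ^ p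
      = ENNReal.ofReal (K ^ p) := by
    rw [ENNReal.ofReal_rpow_of_pos hαpos, ENNReal.ofReal_rpow_of_pos hβpos,
      ← ENNReal.ofReal_add hKApos.le hKBpos.le, hK,
      ENNReal.ofReal_rpow_of_pos (by positivity : (0:ℝ) < KA + KB)]
  rw [hcoef]
  -- conclude
  by_cases hItop : I = ∞
  · rw [hItop]; exact le_top
  have hIr : 0 ≤ I.toReal := ENNReal.toReal_nonneg
  have hchain : T * c ≤ I.toReal + E * (a + b) := by
    have hfin : I + ENNReal.ofReal E * (A + B) ≠ ∞ :=
      ENNReal.add_ne_top.2 ⟨hItop, ENNReal.mul_ne_top ENNReal.ofReal_ne_top hABtop⟩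
    have := ENNReal.toReal_mono hfin hint
    rwa [ENNReal.toReal_mul, ENNReal.toReal_add hItop
        (ENNReal.mul_ne_top ENNReal.ofReal_ne_top hABtop),
      ENNReal.toReal_mul, ENNReal.toReal_ofReal hTnonneg, ENNReal.toReal_ofReal hEnonneg,
      hab, ← hc] at this
  have hfinal : K ^ p * (a + b) ≤ I.toReal := by
    have hceq : 2 * c = Γ * (a + b) := by
      rw [hΓval]; field_simp
    have hTc : T * c = (K ^ p + E) * (a + b) := by
      rw [hTval]
      have : 2 / Γ * (K ^ p + E) * c = (K ^ p + E) * (2 * c) / Γ := by ring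
      rw [this, hceq]
      field_simp
    rw [hTc] at hchain
    have hexp : (K ^ p + E) * (a + b) = K ^ p * (a + b) + E * (a + b) := by ring
    linarith
  calc ENNReal.ofReal (K ^ p) * (A + B) = ENNReal.ofReal (K ^ p * (a + b)) := by
        rw [ENNReal.ofReal_mul hKp_pos.le, ← hab, ENNReal.ofReal_toReal hABtop]
    _ ≤ ENNReal.ofReal I.toReal := ENNReal.ofReal_le_ofReal hfinal
    _ = I := ENNReal.ofReal_toReal hItop
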